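/- For n ≥ 3, let D₁, D₂, D₃ be the directed graphs on vertices v_1,…,v_n whose edge sets are {(v_i,v_{i+1}) : 1 ≤ i ≤ n−1} ∪ {(v_j,v_i) : 1 ≤ i < j ≤ n−1} ∪ S, where S = {(v_n,v_1)} for D₁, S = {(v_n,v_2)} for D₂, and S = {(v_n,v_1),(v_n,v_2)} for D₃. Then γ(D₁) = γ(D₂) = γ(D₃). -/

import Mathlib

namespace PR

/-- Out-degree of `u` in the digraph on vertex set `{1,…,n} ⊆ ℕ` with adjacency `E`. -/
def outDeg (n : ℕ) (E : ℕ → ℕ → Bool) (u : ℕ) : ℕ :=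
  ((Finset.Icc 1 n).filter (fun v => E u v)).card

/-- In-degree of `u`. -/
def inDeg (n : ℕ) (E : ℕ → ℕ → Bool) (u : ℕ) : ℕ :=
  ((Finset.Icc 1 n).filter (fun v => E v u)).card

/-- `E` is a simple digraph on the vertex set `{1,…,n}`: all edges join distinct
vertices of `{1,…,n}` (no loops; the `Bool`-valued adjacency precludes multi-edges). -/
def IsDigraph (n : ℕ) (E : ℕ → ℕ → Bool) : Prop :=
  ∀ u v, E u v = true → u ∈ Finset.Icc 1 n ∧ v ∈ Finset.Icc 1 n ∧ u ≠ v

/-- `WalkLen E k u v` : there is a directed walk of length `k` from `u` to `v`. -/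
def WalkLen (E : ℕ → ℕ → Bool) : ℕ → ℕ → ℕ → Prop
  | 0, u, v => u = v
  | (k+1), u, v => ∃ w, E u w = true ∧ WalkLen E k w v

/-- Every vertex reaches every other vertex by a directed walk. -/
def StronglyConnected (n : ℕ) (E : ℕ → ℕ → Bool) : Prop :=
  ∀ u ∈ Finset.Icc 1 n, ∀ v ∈ Finset.Icc 1 n, ∃ k, WalkLen E k u v

/-- Directed distance: number of edges in a shortest directed path from `u` to `v`. -/
noncomputable def dist (E : ℕ → ℕ → Bool) (u v : ℕ) : ℕ :=
  sInf {k | WalkLen E k u v}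

/-- Distance between two sets of vertices. -/
noncomputable def setDist (E : ℕ → ℕ → Bool) (A B : Set ℕ) : ℕ :=
  sInf {k | ∃ a ∈ A, ∃ b ∈ B, dist E a b = k}

/-- `φ` is the Perron vector of the simple random walk on the digraph: a positive
probability distribution on `{1,…,n}` which is stationary, i.e. `φ P = φ` where
`P(u,v) = 1/d⁺(u)` for edges `(u,v)` and `0` otherwise. -/
def IsPerron (n : ℕ) (E : ℕ → ℕ → Bool) (φ : ℕ → ℝ) : Prop :=
  (∀ v ∈ Finset.Icc 1 n, 0 < φ v) ∧
  (∑ v ∈ Finset.Icc 1 n, φ v = 1) ∧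
  (∀ v ∈ Finset.Icc 1 n, φ v =
    ∑ u ∈ Finset.Icc 1 n, if E u v then φ u / (outDeg n E u : ℝ) else 0)

/-- The principal ratio `γ = (max_u φ(u)) / (min_u φ(u))` of a vector `φ` on `{1,…,n}`. -/
noncomputable def pratio (n : ℕ) (φ : ℕ → ℝ) : ℝ :=
  if h : (Finset.Icc 1 n).Nonempty then
    ((Finset.Icc 1 n).sup' h φ) / ((Finset.Icc 1 n).inf' h φ)
  else 0

/-- Vertices attaining the maximum of `φ`. -/
def Vmax (n : ℕ) (φ : ℕ → ℝ) : Set ℕ :=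
  {v | v ∈ Finset.Icc 1 n ∧ ∀ u ∈ Finset.Icc 1 n, φ u ≤ φ v}

/-- Vertices attaining the minimum of `φ`. -/
def Vmin (n : ℕ) (φ : ℕ → ℝ) : Set ℕ :=
  {v | v ∈ Finset.Icc 1 n ∧ ∀ u ∈ Finset.Icc 1 n, φ v ≤ φ u}

/-- The extremal graph `D₁`: path edges `(v_i,v_{i+1})` for `1 ≤ i ≤ n-1`, back edges
`(v_j,v_i)` for `1 ≤ i < j ≤ n-1`, and the edge `(v_n,v_1)`. -/
def E1 (n : ℕ) : ℕ → ℕ → Bool := fun u v =>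
  decide ((1 ≤ u ∧ u ≤ n - 1 ∧ v = u + 1) ∨ (1 ≤ v ∧ v < u ∧ u ≤ n - 1) ∨
    (u = n ∧ v = 1))

/-- The extremal graph `D₂`: as `D₁` but with `(v_n,v_2)` instead of `(v_n,v_1)`. -/
def E2 (n : ℕ) : ℕ → ℕ → Bool := fun u v =>
  decide ((1 ≤ u ∧ u ≤ n - 1 ∧ v = u + 1) ∨ (1 ≤ v ∧ v < u ∧ u ≤ n - 1) ∨
    (u = n ∧ v = 2))

/-- The extremal graph `D₃`: as `D₁` but with both edges `(v_n,v_1)` and `(v_n,v_2)`. -/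
def E3 (n : ℕ) : ℕ → ℕ → Bool := fun u v =>
  decide ((1 ≤ u ∧ u ≤ n - 1 ∧ v = u + 1) ∨ (1 ≤ v ∧ v < u ∧ u ≤ n - 1) ∨
    (u = n ∧ (v = 1 ∨ v = 2)))

structure CommonEq (n : ℕ) (φ : ℕ → ℝ) : Prop where
  pos : ∀ v ∈ Finset.Icc 1 n, 0 < φ v
  eqn : φ n = φ (n-1) / ((n-1 : ℕ) : ℝ)
  key : ∀ w, 3 ≤ w → w ≤ n-1 →
    φ w = φ (w-1) / ((w-1 : ℕ) : ℝ) + ∑ j ∈ Finset.Icc (w+1) (n-1), φ j / (j : ℝ)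
  two : ∃ e, 0 ≤ e ∧ φ 2 = φ 1 + (∑ j ∈ Finset.Icc 3 (n-1), φ j / (j:ℝ)) + e
  one : ∃ e, 0 ≤ e ∧ φ 1 = (∑ j ∈ Finset.Icc 2 (n-1), φ j / (j:ℝ)) + e

variable {n : ℕ} {φ ψ : ℕ → ℝ}

lemma CommonEq.pos' (h : CommonEq n φ) {j : ℕ} (h1 : 1 ≤ j) (h2 : j ≤ n) : 0 < φ j :=
  h.pos j (by simp [Finset.mem_Icc]; omega)

lemma CommonEq.divnn (h : CommonEq n φ) {j : ℕ} (h1 : 1 ≤ j) (h2 : j ≤ n) :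
    0 ≤ φ j / (j : ℝ) :=
  div_nonneg (h.pos' h1 h2).le (by positivity)

lemma CommonEq.sumnn (h : CommonEq n φ) {a : ℕ} (ha : 1 ≤ a) :
    0 ≤ ∑ j ∈ Finset.Icc a (n-1), φ j / (j:ℝ) :=
  Finset.sum_nonneg fun j hj => by
    simp only [Finset.mem_Icc] at hj; exact h.divnn (by omega) (by omega)

lemma CommonEq.phin_le_sum (hn : 3 ≤ n) (h : CommonEq n φ) {a : ℕ} (ha1 : 1 ≤ a)
    (ha : a ≤ n-1) : φ n ≤ ∑ j ∈ Finset.Icc a (n-1), φ j / (j:ℝ) := by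
  rw [h.eqn]
  exact Finset.single_le_sum (f := fun j => φ j / (j:ℝ))
    (fun j hj => by simp only [Finset.mem_Icc] at hj; exact h.divnn (by omega) (by omega))
    (by simp [Finset.mem_Icc]; omega)

lemma CommonEq.min (hn : 3 ≤ n) (h : CommonEq n φ) :
    ∀ v ∈ Finset.Icc 1 n, φ n ≤ φ v := by
  intro v hv
  simp only [Finset.mem_Icc] at hv
  obtain ⟨e1, he1, hone⟩ := h.one
  obtain ⟨e2, he2, htwo⟩ := h.two
  have h1n : φ n ≤ φ 1 := by
    have := h.phin_le_sum hn (a := 2) (by omega) (by omega)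
    linarith [hone]
  rcases eq_or_ne v n with hvn | hvn
  · rw [hvn]
  rcases eq_or_ne v 1 with rfl | hv1
  · exact h1n
  rcases eq_or_ne v 2 with rfl | hv2
  · have := h.sumnn (a := 3) (by omega)
    linarith
  rcases eq_or_ne v (n-1) with hvn1 | hvn1
  · rw [hvn1, h.eqn]
    apply div_le_self (h.pos' (by omega) (by omega)).le
    have : (2:ℝ) ≤ ((n-1:ℕ):ℝ) := by exact_mod_cast (by omega : 2 ≤ n-1)
    linarith
  · -- 3 ≤ v ≤ n-2
    have hkey := h.key v (by omega) (by omega)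
    have hs := h.phin_le_sum hn (a := v+1) (by omega) (by omega)
    have := h.divnn (j := v-1) (by omega) (by omega)
    linarith

lemma CommonEq.max (hn : 3 ≤ n) (h : CommonEq n φ) :
    ∀ v ∈ Finset.Icc 1 n, φ v ≤ φ 2 := by
  obtain ⟨e1, he1, hone⟩ := h.one
  obtain ⟨e2, he2, htwo⟩ := h.two
  have h12 : φ 1 ≤ φ 2 := by have := h.sumnn (a := 3) (by omega); linarith
  have hmid : ∀ w, 3 ≤ w → w ≤ n-1 → φ w ≤ φ 2 := by
    intro w hw3 hw
    have hkey := h.key w hw3 hw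
    rcases eq_or_ne w 3 with rfl | hw4
    · -- w = 3 case
      have hsplit : (∑ j ∈ Finset.Icc 3 (n-1), φ j / (j:ℝ))
          = φ 3 / 3 + ∑ j ∈ Finset.Icc 4 (n-1), φ j / (j:ℝ) := by
        rw [show Finset.Icc 3 (n-1) = insert 3 (Finset.Icc 4 (n-1)) by
          ext j; simp [Finset.mem_Icc]; omega]
        rw [Finset.sum_insert (by simp [Finset.mem_Icc])]
        norm_num
      have h1T : (∑ j ∈ Finset.Icc 4 (n-1), φ j / (j:ℝ)) ≤ φ 1 := by
        have hsub : (∑ j ∈ Finset.Icc 4 (n-1), φ j / (j:ℝ))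
            ≤ ∑ j ∈ Finset.Icc 2 (n-1), φ j / (j:ℝ) := by
          apply Finset.sum_le_sum_of_subset_of_nonneg
          · intro j hj; simp only [Finset.mem_Icc] at *; omega
          · intro j hj _; simp only [Finset.mem_Icc] at hj
            exact h.divnn (by omega) (by omega)
        linarith
      have hk3 : φ 3 = φ 2 / 2 + ∑ j ∈ Finset.Icc 4 (n-1), φ j / (j:ℝ) := by
        have : ((3-1 : ℕ) : ℝ) = 2 := by norm_num
        rw [hkey]; norm_num
      have h3pos := (h.pos' (j := 3) (by omega) (by omega)).le
      rw [hsplit] at htwo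
      linarith
    · -- w ≥ 4
      have hins : insert (w-1) (Finset.Icc (w+1) (n-1)) ⊆ Finset.Icc 3 (n-1) := by
        intro j hj; simp only [Finset.mem_insert, Finset.mem_Icc] at *; omega
      have hle : φ (w-1) / ((w-1:ℕ):ℝ) + ∑ j ∈ Finset.Icc (w+1) (n-1), φ j / (j:ℝ)
          ≤ ∑ j ∈ Finset.Icc 3 (n-1), φ j / (j:ℝ) := by
        have hsi := Finset.sum_insert (f := fun j => φ j / (j:ℝ)) (a := w-1)
          (s := Finset.Icc (w+1) (n-1)) (by simp [Finset.mem_Icc])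
        rw [← hsi]
        apply Finset.sum_le_sum_of_subset_of_nonneg hins
        intro j hj _; simp only [Finset.mem_Icc] at hj
        exact h.divnn (by omega) (by omega)
      have h1pos := (h.pos' (j := 1) (by omega) (by omega)).le
      linarith
  intro v hv
  simp only [Finset.mem_Icc] at hv
  rcases eq_or_ne v 1 with rfl | hv1
  · exact h12
  rcases eq_or_ne v 2 with rfl | hv2
  · exact le_refl _
  rcases eq_or_ne v n with hvn | hvn
  · rw [hvn]
    have hn1 : φ (n-1) ≤ φ 2 := by
      by_cases hn3 : n = 3
      · rw [hn3]
      · exact hmid (n-1) (by omega) (by omega)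
    rw [h.eqn]
    have h2 : (1:ℝ) ≤ ((n-1:ℕ):ℝ) := by exact_mod_cast (by omega : 1 ≤ n-1)
    have := div_le_self (h.pos' (j := n-1) (by omega) (by omega)).le h2
    linarith
  · exact hmid v (by omega) (by omega)

lemma CommonEq.propor (hn : 3 ≤ n) (hφ : CommonEq n φ) (hψ : CommonEq n ψ) :
    ∀ v, 2 ≤ v → v ≤ n-1 → ψ v * φ (n-1) = φ v * ψ (n-1) := by
  suffices H : ∀ k, ∀ v, 2 ≤ v → v ≤ n-1 → n-1-v ≤ k → ψ v * φ (n-1) = φ v * ψ (n-1) by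
    intro v h1 h2; exact H (n-1-v) v h1 h2 le_rfl
  intro k
  induction k with
  | zero =>
    intro v h1 h2 h3
    have hv : v = n-1 := by omega
    rw [hv]; ring
  | succ k ih =>
    intro v h1 h2 h3
    rcases eq_or_ne v (n-1) with hv | hv
    · rw [hv]; ring
    · have hkφ := hφ.key (v+1) (by omega) (by omega)
      have hkψ := hψ.key (v+1) (by omega) (by omega)
      rw [Nat.add_sub_cancel] at hkφ hkψ
      have hv0 : ((v:ℕ):ℝ) ≠ 0 := Nat.cast_ne_zero.mpr (by omega)
      have eφ : φ v = (φ (v+1) - ∑ j ∈ Finset.Icc (v+2) (n-1), φ j / (j:ℝ)) * v := by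
        rw [← div_eq_iff hv0]; linarith
      have eψ : ψ v = (ψ (v+1) - ∑ j ∈ Finset.Icc (v+2) (n-1), ψ j / (j:ℝ)) * v := by
        rw [← div_eq_iff hv0]; linarith
      have hprod : ψ (v+1) * φ (n-1) = φ (v+1) * ψ (n-1) :=
        ih (v+1) (by omega) (by omega) (by omega)
      have hS : (∑ j ∈ Finset.Icc (v+2) (n-1), ψ j / (j:ℝ)) * φ (n-1)
          = (∑ j ∈ Finset.Icc (v+2) (n-1), φ j / (j:ℝ)) * ψ (n-1) := by
        rw [Finset.sum_mul, Finset.sum_mul]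
        apply Finset.sum_congr rfl
        intro j hj
        simp only [Finset.mem_Icc] at hj
        have := ih j (by omega) (by omega) (by omega)
        rw [div_mul_eq_mul_div, div_mul_eq_mul_div, this]
      linear_combination φ (n-1) * eψ - ψ (n-1) * eφ + (v:ℝ) * hprod - (v:ℝ) * hS

lemma CommonEq.ratio_eq (hn : 3 ≤ n) (hφ : CommonEq n φ) (hψ : CommonEq n ψ) :
    φ 2 / φ n = ψ 2 / ψ n := by
  have h2 := hφ.propor hn hψ 2 le_rfl (by omega)
  have hnn : ψ n * φ (n-1) = φ n * ψ (n-1) := by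
    rw [hφ.eqn, hψ.eqn]; ring
  have hpos1 : (0:ℝ) < φ (n-1) := hφ.pos' (by omega) (by omega)
  have hφn : (0:ℝ) < φ n := hφ.pos' (by omega) le_rfl
  have hψn : (0:ℝ) < ψ n := hψ.pos' (by omega) le_rfl
  rw [div_eq_div_iff (ne_of_gt hφn) (ne_of_gt hψn)]
  have key : (φ 2 * ψ n) * φ (n-1) = (ψ 2 * φ n) * φ (n-1) := by
    linear_combination φ 2 * hnn - φ n * h2
  exact mul_right_cancel₀ (ne_of_gt hpos1) key


lemma CommonEq.pratio_eq (hn : 3 ≤ n) (h : CommonEq n φ) : pratio n φ = φ 2 / φ n := by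
  have hne : (Finset.Icc 1 n).Nonempty := ⟨1, by simp [Finset.mem_Icc]; omega⟩
  rw [pratio, dif_pos hne]
  congr 1
  · exact le_antisymm (Finset.sup'_le _ _ (h.max hn))
      (Finset.le_sup' φ (by simp [Finset.mem_Icc]; omega))
  · exact le_antisymm (Finset.inf'_le φ (by simp [Finset.mem_Icc]; omega))
      (Finset.le_inf' _ _ (h.min hn))


lemma stat_sum {n v : ℕ} {E : ℕ → ℕ → Bool} {φ : ℕ → ℝ}
    (hstat : φ v = ∑ u ∈ Finset.Icc 1 n, if E u v then φ u / (outDeg n E u : ℝ) else 0)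
    {s : Finset ℕ} (hs : (Finset.Icc 1 n).filter (fun u => E u v) = s) :
    φ v = ∑ u ∈ s, φ u / (outDeg n E u : ℝ) := by
  rw [hstat, ← Finset.sum_filter, hs]


lemma od1_small (n u : ℕ) (h1 : 1 ≤ u) (h2 : u ≤ n - 1) :
    outDeg n (E1 n) u = u := by
  unfold outDeg
  have : (Finset.Icc 1 n).filter (fun v => E1 n u v) = insert (u+1) (Finset.Icc 1 (u-1)) := by
    ext v
    simp only [Finset.mem_filter, Finset.mem_Icc, Finset.mem_insert, E1,
      decide_eq_true_eq, true_and, and_true]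
    omega
  rw [this, Finset.card_insert_of_notMem (by simp), Nat.card_Icc]
  omega

lemma od1_n (n : ℕ) (hn : 3 ≤ n) : outDeg n (E1 n) n = 1 := by
  unfold outDeg
  have : (Finset.Icc 1 n).filter (fun v => E1 n n v) = {1} := by
    ext v
    simp only [Finset.mem_filter, Finset.mem_Icc, Finset.mem_singleton, E1,
      decide_eq_true_eq, true_and, and_true]
    omega
  rw [this]; rfl

lemma common1 (n : ℕ) (hn : 3 ≤ n) {φ : ℕ → ℝ} (h : IsPerron n (E1 n) φ) :
    CommonEq n φ := by
  obtain ⟨hpos, hsum, hstat⟩ := h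
  have hconv : ∀ a : ℕ, 1 ≤ a → ∀ u ∈ Finset.Icc a (n-1),
      φ u / (outDeg n (E1 n) u : ℝ) = φ u / (u:ℝ) := by
    intro a ha u hu
    simp only [Finset.mem_Icc] at hu
    rw [od1_small n u (by omega) (by omega)]
  refine ⟨hpos, ?_, ?_, ?_, ?_⟩
  · -- eqn
    have h1 := stat_sum (hstat n (by simp [Finset.mem_Icc]; omega))
      (s := {n-1}) (by
        ext u
        simp only [Finset.mem_filter, Finset.mem_Icc, Finset.mem_singleton, E1,
          decide_eq_true_eq, true_and, and_true]
        omega)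
    rw [Finset.sum_singleton, od1_small n (n-1) (by omega) (by omega)] at h1
    exact h1
  · -- key
    intro w hw3 hw
    have h1 := stat_sum (hstat w (by simp [Finset.mem_Icc]; omega))
      (s := insert (w-1) (Finset.Icc (w+1) (n-1))) (by
        ext u
        simp only [Finset.mem_filter, Finset.mem_Icc, Finset.mem_insert, E1,
          decide_eq_true_eq, true_and, and_true]
        omega)
    rw [Finset.sum_insert (by simp [Finset.mem_Icc]),
      od1_small n (w-1) (by omega) (by omega),
      Finset.sum_congr rfl (hconv (w+1) (by omega))] at h1
    exact h1
  · -- two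
    refine ⟨0, le_refl _, ?_⟩
    have h1 := stat_sum (hstat 2 (by simp [Finset.mem_Icc]; omega))
      (s := insert 1 (Finset.Icc 3 (n-1))) (by
        ext u
        simp only [Finset.mem_filter, Finset.mem_Icc, Finset.mem_insert, E1,
          decide_eq_true_eq, true_and, and_true]
        omega)
    rw [Finset.sum_insert (by simp [Finset.mem_Icc]),
      od1_small n 1 (by omega) (by omega),
      Finset.sum_congr rfl (hconv 3 (by omega))] at h1
    rw [h1]
    norm_num
  · -- one
    refine ⟨φ n, (hpos n (by simp [Finset.mem_Icc]; omega)).le, ?_⟩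
    have h1 := stat_sum (hstat 1 (by simp [Finset.mem_Icc]; omega))
      (s := insert n (Finset.Icc 2 (n-1))) (by
        ext u
        simp only [Finset.mem_filter, Finset.mem_Icc, Finset.mem_insert, E1,
          decide_eq_true_eq, true_and, and_true]
        omega)
    rw [Finset.sum_insert (by simp [Finset.mem_Icc]; omega), od1_n n hn,
      Finset.sum_congr rfl (hconv 2 (by omega))] at h1
    rw [h1]
    norm_num
    ring


lemma od2_small (n u : ℕ) (h1 : 1 ≤ u) (h2 : u ≤ n - 1) :
    outDeg n (E2 n) u = u := by
  unfold outDeg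
  have : (Finset.Icc 1 n).filter (fun v => E2 n u v) = insert (u+1) (Finset.Icc 1 (u-1)) := by
    ext v
    simp only [Finset.mem_filter, Finset.mem_Icc, Finset.mem_insert, E2,
      decide_eq_true_eq, true_and, and_true]
    omega
  rw [this, Finset.card_insert_of_notMem (by simp), Nat.card_Icc]
  omega

lemma od2_n (n : ℕ) (hn : 3 ≤ n) : outDeg n (E2 n) n = 1 := by
  unfold outDeg
  have : (Finset.Icc 1 n).filter (fun v => E2 n n v) = {2} := by
    ext v
    simp only [Finset.mem_filter, Finset.mem_Icc, Finset.mem_singleton, E2,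
      decide_eq_true_eq, true_and, and_true]
    omega
  rw [this]; rfl

lemma od3_small (n u : ℕ) (h1 : 1 ≤ u) (h2 : u ≤ n - 1) :
    outDeg n (E3 n) u = u := by
  unfold outDeg
  have : (Finset.Icc 1 n).filter (fun v => E3 n u v) = insert (u+1) (Finset.Icc 1 (u-1)) := by
    ext v
    simp only [Finset.mem_filter, Finset.mem_Icc, Finset.mem_insert, E3,
      decide_eq_true_eq, true_and, and_true]
    omega
  rw [this, Finset.card_insert_of_notMem (by simp), Nat.card_Icc]
  omega

lemma od3_n (n : ℕ) (hn : 3 ≤ n) : outDeg n (E3 n) n = 2 := by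
  unfold outDeg
  have : (Finset.Icc 1 n).filter (fun v => E3 n n v) = {1, 2} := by
    ext v
    simp only [Finset.mem_filter, Finset.mem_Icc, Finset.mem_insert, Finset.mem_singleton,
      E3, decide_eq_true_eq, true_and, and_true]
    omega
  rw [this]; rfl

lemma common2 (n : ℕ) (hn : 3 ≤ n) {φ : ℕ → ℝ} (h : IsPerron n (E2 n) φ) :
    CommonEq n φ := by
  obtain ⟨hpos, hsum, hstat⟩ := h
  have hconv : ∀ a : ℕ, 1 ≤ a → ∀ u ∈ Finset.Icc a (n-1),
      φ u / (outDeg n (E2 n) u : ℝ) = φ u / (u:ℝ) := by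
    intro a ha u hu
    simp only [Finset.mem_Icc] at hu
    rw [od2_small n u (by omega) (by omega)]
  refine ⟨hpos, ?_, ?_, ?_, ?_⟩
  · have h1 := stat_sum (hstat n (by simp [Finset.mem_Icc]; omega))
      (s := {n-1}) (by
        ext u
        simp only [Finset.mem_filter, Finset.mem_Icc, Finset.mem_singleton, E2,
          decide_eq_true_eq, true_and, and_true]
        omega)
    rw [Finset.sum_singleton, od2_small n (n-1) (by omega) (by omega)] at h1
    exact h1
  · intro w hw3 hw
    have h1 := stat_sum (hstat w (by simp [Finset.mem_Icc]; omega))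
      (s := insert (w-1) (Finset.Icc (w+1) (n-1))) (by
        ext u
        simp only [Finset.mem_filter, Finset.mem_Icc, Finset.mem_insert, E2,
          decide_eq_true_eq, true_and, and_true]
        omega)
    rw [Finset.sum_insert (by simp [Finset.mem_Icc]),
      od2_small n (w-1) (by omega) (by omega),
      Finset.sum_congr rfl (hconv (w+1) (by omega))] at h1
    exact h1
  · refine ⟨φ n, (hpos n (by simp [Finset.mem_Icc]; omega)).le, ?_⟩
    have h1 := stat_sum (hstat 2 (by simp [Finset.mem_Icc]; omega))
      (s := insert n (insert 1 (Finset.Icc 3 (n-1)))) (by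
        ext u
        simp only [Finset.mem_filter, Finset.mem_Icc, Finset.mem_insert, E2,
          decide_eq_true_eq, true_and, and_true]
        omega)
    rw [Finset.sum_insert (by simp [Finset.mem_Icc]; omega),
      Finset.sum_insert (by simp [Finset.mem_Icc]),
      od2_n n hn, od2_small n 1 (by omega) (by omega),
      Finset.sum_congr rfl (hconv 3 (by omega))] at h1
    rw [h1]
    norm_num
    ring
  · refine ⟨0, le_refl _, ?_⟩
    have h1 := stat_sum (hstat 1 (by simp [Finset.mem_Icc]; omega))
      (s := Finset.Icc 2 (n-1)) (by
        ext u
        simp only [Finset.mem_filter, Finset.mem_Icc, E2,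
          decide_eq_true_eq, true_and, and_true]
        omega)
    rw [Finset.sum_congr rfl (hconv 2 (by omega))] at h1
    rw [h1]
    norm_num

lemma common3 (n : ℕ) (hn : 3 ≤ n) {φ : ℕ → ℝ} (h : IsPerron n (E3 n) φ) :
    CommonEq n φ := by
  obtain ⟨hpos, hsum, hstat⟩ := h
  have hconv : ∀ a : ℕ, 1 ≤ a → ∀ u ∈ Finset.Icc a (n-1),
      φ u / (outDeg n (E3 n) u : ℝ) = φ u / (u:ℝ) := by
    intro a ha u hu
    simp only [Finset.mem_Icc] at hu
    rw [od3_small n u (by omega) (by omega)]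
  refine ⟨hpos, ?_, ?_, ?_, ?_⟩
  · have h1 := stat_sum (hstat n (by simp [Finset.mem_Icc]; omega))
      (s := {n-1}) (by
        ext u
        simp only [Finset.mem_filter, Finset.mem_Icc, Finset.mem_singleton, E3,
          decide_eq_true_eq, true_and, and_true]
        omega)
    rw [Finset.sum_singleton, od3_small n (n-1) (by omega) (by omega)] at h1
    exact h1
  · intro w hw3 hw
    have h1 := stat_sum (hstat w (by simp [Finset.mem_Icc]; omega))
      (s := insert (w-1) (Finset.Icc (w+1) (n-1))) (by
        ext u
        simp only [Finset.mem_filter, Finset.mem_Icc, Finset.mem_insert, E3,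
          decide_eq_true_eq, true_and, and_true]
        omega)
    rw [Finset.sum_insert (by simp [Finset.mem_Icc]),
      od3_small n (w-1) (by omega) (by omega),
      Finset.sum_congr rfl (hconv (w+1) (by omega))] at h1
    exact h1
  · refine ⟨φ n / 2, (by have := hpos n (by simp [Finset.mem_Icc]; omega); positivity) , ?_⟩
    have h1 := stat_sum (hstat 2 (by simp [Finset.mem_Icc]; omega))
      (s := insert n (insert 1 (Finset.Icc 3 (n-1)))) (by
        ext u
        simp only [Finset.mem_filter, Finset.mem_Icc, Finset.mem_insert, E3,
          decide_eq_true_eq, true_and, and_true]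
        norm_num
        omega)
    rw [Finset.sum_insert (by simp [Finset.mem_Icc]; omega),
      Finset.sum_insert (by simp [Finset.mem_Icc]),
      od3_n n hn, od3_small n 1 (by omega) (by omega),
      Finset.sum_congr rfl (hconv 3 (by omega))] at h1
    rw [h1]
    norm_num
    ring
  · refine ⟨φ n / 2, (by have := hpos n (by simp [Finset.mem_Icc]; omega); positivity), ?_⟩
    have h1 := stat_sum (hstat 1 (by simp [Finset.mem_Icc]; omega))
      (s := insert n (Finset.Icc 2 (n-1))) (by
        ext u
        simp only [Finset.mem_filter, Finset.mem_Icc, Finset.mem_insert, E3,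
          decide_eq_true_eq, true_and, and_true]
        norm_num
        omega)
    rw [Finset.sum_insert (by simp [Finset.mem_Icc]; omega), od3_n n hn,
      Finset.sum_congr rfl (hconv 2 (by omega))] at h1
    rw [h1]
    norm_num
    ring


/-- The three extremal graphs `D₁`, `D₂`, `D₃` have the same principal ratio. -/
theorem stmt17 (n : ℕ) (hn : 3 ≤ n) (φ₁ φ₂ φ₃ : ℕ → ℝ)
    (hφ₁ : IsPerron n (E1 n) φ₁) (hφ₂ : IsPerron n (E2 n) φ₂)
    (hφ₃ : IsPerron n (E3 n) φ₃) :
    pratio n φ₁ = pratio n φ₂ ∧ pratio n φ₂ = pratio n φ₃ := by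
  have c1 := common1 n hn hφ₁
  have c2 := common2 n hn hφ₂
  have c3 := common3 n hn hφ₃
  rw [c1.pratio_eq hn, c2.pratio_eq hn, c3.pratio_eq hn]
  exact ⟨c1.ratio_eq hn c2, c2.ratio_eq hn c3⟩

end PR
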